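/- Let r : ℝ → ℝ be locally integrable with r(u) ≥ 0 for all u, and set B(t,T) := exp(∫_t^T r(u) du). Let t_i = u_k < u_{k+1} < ⋯ < u_ℓ = t_{i+1} ≤ T2 be real numbers and let s1 ≥ s2 ≥ 0. Then s1·∑_{j=k}^{ℓ−1} (u_{j+1} − u_j)·B(u_{j+1},T2) − s2·(t_{i+1} − t_i)·B(t_{i+1},T2) ≥ (s1 − s2)·(t_{i+1} − t_i)·B(t_{i+1},T2). -/
import Mathlib


open MeasureTheory Finset

/-- Refined-payment-dates estimate: if the payment dates `u k < ⋯ < u ℓ` of the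
shorter-maturity CDS refine the payment period `(t_i, t_{i+1}] = (u k, u ℓ]` of the
longer-maturity one, the net protection payment for the period, valued at `T2`, is at
least `(s1 − s2)(t_{i+1} − t_i)·B(t_{i+1},T2)`. -/
theorem stmt_3
    (r : ℝ → ℝ) (hr : LocallyIntegrable r) (hr0 : ∀ u, 0 ≤ r u)
    (B : ℝ → ℝ → ℝ) (hB : ∀ t T, B t T = Real.exp (∫ u in t..T, r u))
    (T2 : ℝ) (u : ℕ → ℝ) (k ℓ : ℕ) (hkl : k < ℓ)
    (hu : ∀ j, k ≤ j → j < ℓ → u j < u (j + 1))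
    (huT2 : u ℓ ≤ T2)
    (s1 s2 : ℝ) (hs : s2 ≤ s1) (hs2 : 0 ≤ s2) :
    (s1 - s2) * (u ℓ - u k) * B (u ℓ) T2 ≤
      s1 * ∑ j ∈ Ico k ℓ, (u (j + 1) - u j) * B (u (j + 1)) T2
        - s2 * (u ℓ - u k) * B (u ℓ) T2 := by
  -- monotonicity of u on [k, ℓ]
  have hchain : ∀ a b : ℕ, k ≤ a → a ≤ b → b ≤ ℓ → u a ≤ u b := by
    intro a b hka hab hbl
    induction b with
    | zero => simp [Nat.le_zero.mp hab]
    | succ n ih =>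
      rcases Nat.lt_or_ge a (n + 1) with h | h
      · have han : a ≤ n := Nat.lt_succ_iff.mp h
        have := ih han (Nat.le_of_succ_le hbl)
        have hlt : u n < u (n + 1) := hu n (le_trans hka han) (Nat.lt_of_succ_le hbl)
        linarith
      · have : a = n + 1 := le_antisymm hab h
        simp [this]
  -- B is antitone in first argument up to T2
  have hBle : ∀ a, k ≤ a → a ≤ ℓ → B (u ℓ) T2 ≤ B (u a) T2 := by
    intro a hka hal
    rw [hB, hB]
    apply Real.exp_le_exp.mpr
    have hua : u a ≤ u ℓ := hchain a ℓ hka hal le_rfl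
    have hint : ∀ x y : ℝ, IntervalIntegrable r MeasureTheory.volume x y :=
      fun x y => (hr.integrableOn_isCompact isCompact_uIcc).intervalIntegrable
    have hsplit : (∫ v in u a..T2, r v) =
        (∫ v in u a..u ℓ, r v) + ∫ v in u ℓ..T2, r v :=
      (intervalIntegral.integral_add_adjacent_intervals (hint _ _) (hint _ _)).symm
    have hnn : 0 ≤ ∫ v in u a..u ℓ, r v :=
      intervalIntegral.integral_nonneg hua (fun x _ => hr0 x)
    linarith
  have hBpos : 0 < B (u ℓ) T2 := by rw [hB]; exact Real.exp_pos _
  -- telescoping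
  have htel : ∑ j ∈ Ico k ℓ, (u (j + 1) - u j) = u ℓ - u k := by
    rw [Finset.sum_Ico_eq_sub _ hkl.le]
    rw [Finset.sum_range_sub (fun n => u n), Finset.sum_range_sub (fun n => u n)]
    ring
  have key : (u ℓ - u k) * B (u ℓ) T2 ≤
      ∑ j ∈ Ico k ℓ, (u (j + 1) - u j) * B (u (j + 1)) T2 := by
    calc (u ℓ - u k) * B (u ℓ) T2
        = ∑ j ∈ Ico k ℓ, (u (j + 1) - u j) * B (u ℓ) T2 := by
          rw [← Finset.sum_mul, htel]
      _ ≤ ∑ j ∈ Ico k ℓ, (u (j + 1) - u j) * B (u (j + 1)) T2 := by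
          apply Finset.sum_le_sum
          intro j hj
          rw [Finset.mem_Ico] at hj
          have hd : 0 ≤ u (j + 1) - u j := le_of_lt (sub_pos.mpr (hu j hj.1 hj.2))
          exact mul_le_mul_of_nonneg_left (hBle (j + 1) (by omega) hj.2) hd
  nlinarith [mul_le_mul_of_nonneg_left key (le_trans hs2 hs)]
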